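/- arXiv:0911.1870 — 3 statements merged into one kernel-verified Lean document; each statement's English description precedes it below -/
import Mathlib

section
/- Let O be a bounded open subset of R^M and g : R → (-∞, ∞] a lower semicontinuous convex function. Suppose (v_n) is a sequence in L¹(O) with v_n ⇀ v weakly in L¹(O), g(v_n) ∈ L¹(O) for each n, and g(v_n) ⇀ G weakly in L¹(O). Then g(v) ≤ G almost everywhere on O, g(v) ∈ L¹(O), and ∫_O g(v) dy ≤ liminf_{n→∞} ∫_O g(v_n) dy. -/
open MeasureTheory Set Filter Topology

/-- Weak convergence in `L¹(O)`: convergence of integrals against all bounded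
measurable test functions. -/
def WeakL1Tendsto {E : Type*} [MeasurableSpace E] (μ : Measure E)
    (v : ℕ → E → ℝ) (w : E → ℝ) : Prop :=
  ∀ φ : E → ℝ, Measurable φ → (∃ C : ℝ, ∀ x, |φ x| ≤ C) →
    Tendsto (fun n => ∫ x, v n x * φ x ∂μ) atTop (nhds (∫ x, w x * φ x ∂μ))

set_option linter.unusedSectionVars false

section Core
variable (g : ℝ → EReal)

/-- affine minorant -/
def IsAffMin (a b : ℝ) : Prop := ∀ y : ℝ, ((a * y + b : ℝ) : EReal) ≤ g y

variable (hg_lsc : LowerSemicontinuous g)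
  (hg_conv : ∀ x y : ℝ, ∀ t : ℝ, 0 ≤ t → t ≤ 1 →
      g (t * x + (1 - t) * y) ≤ (t : EReal) * g x + ((1 - t : ℝ) : EReal) * g y)
  (hg_ne_bot : ∀ x, g x ≠ ⊥)

include hg_ne_bot in
lemma coe_f {x : ℝ} (hx : g x ≠ ⊤) : ((g x).toReal : EReal) = g x :=
  EReal.coe_toReal hx (hg_ne_bot x)

include hg_conv hg_ne_bot in
lemma comb_le {x y t : ℝ} (hx : g x ≠ ⊤) (hy : g y ≠ ⊤) (h0 : 0 ≤ t) (h1 : t ≤ 1) :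
    g (t * x + (1 - t) * y) ≤ (((t * (g x).toReal + (1 - t) * (g y).toReal : ℝ)) : EReal) := by
  have h := hg_conv x y t h0 h1
  rw [← coe_f g hg_ne_bot hx, ← coe_f g hg_ne_bot hy] at h
  rw [← EReal.coe_mul, ← EReal.coe_mul, ← EReal.coe_add] at h
  exact h

include hg_conv hg_ne_bot in
lemma mem_D_comb {x y t : ℝ} (hx : g x ≠ ⊤) (hy : g y ≠ ⊤) (h0 : 0 ≤ t) (h1 : t ≤ 1) :
    g (t * x + (1 - t) * y) ≠ ⊤ := by
  intro htop
  have h := comb_le g hg_conv hg_ne_bot hx hy h0 h1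
  rw [htop] at h
  exact (EReal.coe_lt_top _).not_ge h

include hg_conv hg_ne_bot in
lemma convexOn_f : ConvexOn ℝ {x : ℝ | g x ≠ ⊤} (fun x : ℝ => (g x).toReal) := by
  constructor
  · intro x hx y hy a b ha hb hab
    have h1 : b = 1 - a := by linarith
    subst h1
    simpa [smul_eq_mul] using mem_D_comb g hg_conv hg_ne_bot hx hy ha (by linarith)
  · intro x hx y hy a b ha hb hab
    have h1 : b = 1 - a := by linarith
    subst h1
    have h := comb_le g hg_conv hg_ne_bot hx hy ha (by linarith)
    have hne := mem_D_comb g hg_conv hg_ne_bot hx hy ha (by linarith)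
    rw [← coe_f g hg_ne_bot hne] at h
    simpa [smul_eq_mul] using EReal.coe_le_coe_iff.mp h

include hg_conv hg_ne_bot in
/-- at a point strictly between two points of the domain, `g` has a supporting line -/
lemma exists_tangent {q p w : ℝ} (hpq : p < q) (hqw : q < w)
    (hp : g p ≠ ⊤) (hw : g w ≠ ⊤) :
    ∃ a b : ℝ, IsAffMin g a b ∧ a * q + b = (g q).toReal := by
  have hcf := convexOn_f g hg_conv hg_ne_bot
  set f : ℝ → ℝ := fun x : ℝ => (g x).toReal with hf
  have hq : g q ≠ ⊤ := by
    have hwp : w - p ≠ 0 := by linarith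
    have ht : ((w - q)/(w-p)) * p + (1 - (w - q)/(w-p)) * w = q := by
      field_simp
      ring
    exact ht ▸ mem_D_comb g hg_conv hg_ne_bot hp hw
      (div_nonneg (by linarith) (by linarith))
      (by rw [div_le_one (by linarith)]; linarith)
  -- the set of right slopes
  set S : Set ℝ := (fun r => (f r - f q) / (r - q)) '' {r : ℝ | g r ≠ ⊤ ∧ q < r} with hS
  have hSne : S.Nonempty := ⟨_, ⟨w, ⟨hw, hqw⟩, rfl⟩⟩
  have hSbdd : BddBelow S := by
    refine ⟨(f q - f p) / (q - p), ?_⟩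
    rintro _ ⟨r, ⟨hr, hqr⟩, rfl⟩
    exact hcf.slope_mono_adjacent hp hr hpq hqr
  set s := sInf S with hs
  refine ⟨s, f q - s * q, ?_, by ring⟩
  intro y
  rcases eq_or_ne (g y) ⊤ with hy | hy
  · rw [hy]; exact le_top
  rw [← coe_f g hg_ne_bot hy, EReal.coe_le_coe_iff]
  rcases lt_trichotomy y q with hlt | heq | hgt
  · -- s ≥ slope y q
    have h1 : (f q - f y) / (q - y) ≤ s := by
      apply le_csInf hSne
      rintro _ ⟨r, ⟨hr, hqr⟩, rfl⟩
      exact hcf.slope_mono_adjacent hy hr hlt hqr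
    have h2 : f q - f y ≤ s * (q - y) := by
      have h2' := mul_le_mul_of_nonneg_right h1 (show (0:ℝ) ≤ q - y by linarith)
      rwa [div_mul_cancel₀ _ (show q - y ≠ 0 by linarith)] at h2'
    nlinarith [h2]
  · subst heq; linarith [le_refl (f y)]
  · have h1 : s ≤ (f y - f q) / (y - q) := csInf_le hSbdd ⟨y, ⟨hy, hgt⟩, rfl⟩
    have h2 : s * (y - q) ≤ f y - f q := by
      have h2' := mul_le_mul_of_nonneg_right h1 (show (0:ℝ) ≤ y - q by linarith)
      rwa [div_mul_cancel₀ _ (show y - q ≠ 0 by linarith)] at h2'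
    nlinarith [h2]

include hg_conv hg_ne_bot in
lemma mem_D_between {p q w : ℝ} (hpq : p < q) (hqw : q < w)
    (hp : g p ≠ ⊤) (hw : g w ≠ ⊤) : g q ≠ ⊤ := by
  have hwp : w - p ≠ 0 := by linarith
  have ht : ((w - q)/(w-p)) * p + (1 - (w - q)/(w-p)) * w = q := by
    field_simp
    ring
  exact ht ▸ mem_D_comb g hg_conv hg_ne_bot hp hw
    (div_nonneg (by linarith) (by linarith))
    (by rw [div_le_one (by linarith)]; linarith)

include hg_lsc hg_conv hg_ne_bot in
/-- any tangent line at suitable rational points close to `x` (from the left)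
has value at `x` at least `r`, for some rational point. -/
lemma tangent_approx {x p : ℝ} (hx : g x ≠ ⊤) (hp : g p ≠ ⊤) (hpx : p < x)
    {r : ℝ} (hr : (r : EReal) < g x) :
    ∃ q : ℚ, (∃ p' w', p' < (q:ℝ) ∧ (q:ℝ) < w' ∧ g p' ≠ ⊤ ∧ g w' ≠ ⊤) ∧
      ∀ a b : ℝ, IsAffMin g a b → a * q + b = (g (q:ℝ)).toReal → r ≤ a * x + b := by
  have hcf := convexOn_f g hg_conv hg_ne_bot
  set f : ℝ → ℝ := fun x : ℝ => (g x).toReal with hf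
  set p' : ℝ := (1/2) * p + (1 - 1/2) * x with hp'def
  have hp' : g p' ≠ ⊤ := mem_D_comb g hg_conv hg_ne_bot hp hx (by norm_num) (by norm_num)
  have hpp' : p < p' := by rw [hp'def]; linarith
  have hp'x : p' < x := by rw [hp'def]; linarith
  set m : ℝ := (f p' - f p) / (p' - p) with hm
  -- a strictly intermediate level
  obtain ⟨r1, hrr1, hr1x⟩ := EReal.exists_between_coe_real hr
  -- lower semicontinuity at x
  have hev : ∀ᶠ y in 𝓝 x, (r1 : EReal) < g y := hg_lsc x r1 hr1x
  obtain ⟨δ, hδ, hball⟩ := Metric.eventually_nhds_iff.mp hev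
  set ε : ℝ := min (δ/2) ((r1 - r) / (|m| + 1)) with hε
  have hr1r : 0 < r1 - r := by
    have := EReal.coe_lt_coe_iff.mp hrr1; linarith
  have hεpos : 0 < ε := lt_min (by linarith) (div_pos hr1r (by positivity))
  have hlt : max p' (x - ε) < x := by
    apply max_lt hp'x (by linarith)
  obtain ⟨q, hq1, hq2⟩ := exists_rat_btwn hlt
  have hqp' : p' < (q:ℝ) := lt_of_le_of_lt (le_max_left _ _) hq1
  have hqx : (q:ℝ) < x := hq2
  have hqD : g (q:ℝ) ≠ ⊤ := mem_D_between g hg_conv hg_ne_bot hqp' hqx hp' hx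
  have hqnear : dist (q:ℝ) x < δ := by
    rw [Real.dist_eq, abs_sub_lt_iff]
    have h1 : x - ε < (q:ℝ) := lt_of_le_of_lt (le_max_right _ _) hq1
    have h2 : ε ≤ δ/2 := min_le_left _ _
    constructor <;> linarith
  have hq_big : r1 < f q := by
    have := hball hqnear
    rw [← coe_f g hg_ne_bot hqD] at this
    exact EReal.coe_lt_coe_iff.mp this
  refine ⟨q, ⟨p', x, hqp', hqx, hp', hx⟩, ?_⟩
  intro a b hmin htang
  -- a ≥ slope p' q ≥ slope p p' = m
  have ha1 : (f q - f p') / ((q:ℝ) - p') ≤ a := by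
    have h1 : a * p' + b ≤ f p' := by
      have := hmin p'
      rw [← coe_f g hg_ne_bot hp'] at this
      exact EReal.coe_le_coe_iff.mp this
    have h2 : f q - f p' ≤ a * ((q:ℝ) - p') := by nlinarith [htang]
    rw [div_le_iff₀ (by linarith)]
    linarith
  have ha2 : m ≤ (f q - f p') / ((q:ℝ) - p') :=
    hcf.slope_mono_adjacent hp hqD hpp' hqp'
  have ham : m ≤ a := le_trans ha2 ha1
  -- value estimate
  have hxq : 0 ≤ x - (q:ℝ) := by linarith
  have hεq : x - (q:ℝ) ≤ (r1 - r) / (|m| + 1) := by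
    have h1 : x - ε < (q:ℝ) := lt_of_le_of_lt (le_max_right _ _) hq1
    have h2 : ε ≤ (r1 - r) / (|m| + 1) := min_le_right _ _
    linarith
  have habs : |m| * (x - (q:ℝ)) ≤ r1 - r := by
    have h3 : (|m| + 1) * (x - (q:ℝ)) ≤ (|m|+1) * ((r1 - r) / (|m| + 1)) :=
      mul_le_mul_of_nonneg_left hεq (by positivity)
    rw [mul_div_cancel₀ _ (by positivity)] at h3
    nlinarith [abs_nonneg m]
  have hml : -(|m|) ≤ m := neg_abs_le m
  have hval : f q + m * (x - (q:ℝ)) ≤ a * x + b := by nlinarith [htang]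
  nlinarith [hq_big, habs, hval, mul_le_mul_of_nonneg_right hml hxq]

include hg_lsc hg_ne_bot in
/-- at a point where `g = ⊤`, lying to the right of the domain, there are
affine minorants with arbitrarily large value. -/
lemma top_line {x : ℝ} (hx : g x = ⊤) {a0 b0 : ℝ}
    (hD : ∀ y, g y ≠ ⊤ → y ≤ x) (hab0 : IsAffMin g a0 b0) (R : ℝ) :
    ∃ k : ℚ, ∃ c : ℝ, IsAffMin g (k:ℝ) c ∧ R ≤ (k:ℝ) * x + c := by
  have hRlt : (R : EReal) < g x := by rw [hx]; exact EReal.coe_lt_top R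
  obtain ⟨δ, hδ, hball⟩ := Metric.eventually_nhds_iff.mp (hg_lsc x R hRlt)
  obtain ⟨k, hk⟩ := exists_rat_gt (max 0 (max a0 ((R - b0 - a0*(x - δ)) / δ)))
  have hk0 : (0:ℝ) ≤ (k:ℝ) := le_of_lt (lt_of_le_of_lt (le_max_left _ _) hk)
  have hka : a0 ≤ (k:ℝ) :=
    le_of_lt (lt_of_le_of_lt (le_trans (le_max_left _ _) (le_max_right _ _)) hk)
  have hkR : (R - b0 - a0*(x - δ)) / δ ≤ (k:ℝ) :=
    le_of_lt (lt_of_le_of_lt (le_trans (le_max_right _ _) (le_max_right _ _)) hk)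
  have hkR' : R - b0 - a0*(x - δ) ≤ (k:ℝ) * δ := by
    rw [div_le_iff₀ hδ] at hkR; linarith
  refine ⟨k, R - (k:ℝ) * x, ?_, by linarith⟩
  intro y
  rcases eq_or_ne (g y) ⊤ with hy | hy
  · rw [hy]; exact le_top
  have hyx : y ≤ x := hD y hy
  rcases lt_or_ge (x - δ) y with h | h
  · -- close to x : use lsc bound
    have hdist : dist y x < δ := by
      rw [Real.dist_eq, abs_sub_lt_iff]; constructor <;> linarith
    have hRy : (R : EReal) < g y := hball hdist
    refine le_trans ?_ (le_of_lt hRy)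
    rw [EReal.coe_le_coe_iff]
    nlinarith
  · -- far from x : use the affine minorant
    refine le_trans ?_ (hab0 y)
    rw [EReal.coe_le_coe_iff]
    nlinarith [mul_le_mul_of_nonpos_left h (show a0 - (k:ℝ) ≤ 0 by linarith)]

include hg_lsc in
lemma lsc_neg : LowerSemicontinuous (fun y : ℝ => g (-y)) := by
  intro x r hr
  have h := hg_lsc (-x) r hr
  exact (continuous_neg.tendsto x).eventually h

include hg_conv in
lemma conv_neg : ∀ x y : ℝ, ∀ t : ℝ, 0 ≤ t → t ≤ 1 →
    (fun y : ℝ => g (-y)) (t * x + (1 - t) * y) ≤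
      (t : EReal) * (fun y : ℝ => g (-y)) x + ((1 - t : ℝ) : EReal) * (fun y : ℝ => g (-y)) y := by
  intro x y t h0 h1
  have h := hg_conv (-x) (-y) t h0 h1
  rw [show t * -x + (1 - t) * -y = -(t * x + (1 - t) * y) by ring] at h
  exact h

lemma affmin_neg {a b : ℝ} (h : IsAffMin g a b) : IsAffMin (fun y : ℝ => g (-y)) (-a) b := by
  intro y
  simpa [show -a * y + b = a * (-y) + b by ring] using h (-y)

include hg_conv hg_ne_bot in
lemma exists_minorant (hproper : ∃ y, g y ≠ ⊤) : ∃ a b : ℝ, IsAffMin g a b := by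
  obtain ⟨y0, hy0⟩ := hproper
  by_cases h : ∃ p w : ℝ, p < w ∧ g p ≠ ⊤ ∧ g w ≠ ⊤
  · obtain ⟨p, w, hpw, hp, hw⟩ := h
    obtain ⟨a, b, hab, -⟩ := exists_tangent g hg_conv hg_ne_bot
      (show p < (1/2)*p + (1-1/2)*w by linarith) (show (1/2)*p + (1-1/2)*w < w by linarith) hp hw
    exact ⟨a, b, hab⟩
  · refine ⟨0, (g y0).toReal, fun y => ?_⟩
    rcases eq_or_ne (g y) ⊤ with hy | hy
    · rw [hy]; exact le_top
    · have hyy0 : y = y0 := by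
        by_contra hne
        rcases lt_or_gt_of_ne hne with h1 | h1
        · exact h ⟨y, y0, h1, hy, hy0⟩
        · exact h ⟨y0, y, h1, hy0, hy⟩
      subst hyy0
      rw [show ((0:ℝ) * y + (g y).toReal : ℝ) = (g y).toReal by ring]
      exact le_of_eq (coe_f g hg_ne_bot hy)

include hg_lsc hg_conv hg_ne_bot in
/-- MASTER: a countable family of affine minorants whose sup is ≥ g. -/
lemma exists_family (hproper : ∃ y, g y ≠ ⊤) :
    ∃ L : ℚ ⊕ ℚ → ℝ × ℝ, (∀ i, IsAffMin g (L i).1 (L i).2) ∧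
      ∀ x : ℝ, g x ≤ ⨆ i : ℚ ⊕ ℚ, (((L i).1 * x + (L i).2 : ℝ) : EReal) := by
  classical
  obtain ⟨y00, hy00⟩ := hproper
  obtain ⟨a0, b0, hab0⟩ := exists_minorant g hg_conv hg_ne_bot ⟨y00, hy00⟩
  -- tangent lines at rational points
  set T : ℚ → ℝ × ℝ := fun q =>
    if h : ∃ ab : ℝ × ℝ, IsAffMin g ab.1 ab.2 ∧ ab.1 * (q:ℝ) + ab.2 = (g (q:ℝ)).toReal
    then h.choose else (a0, b0) with hT
  -- near-optimal lines with rational slope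
  set C : ℚ → ℝ × ℝ := fun k =>
    if h : ∃ c : ℝ, IsAffMin g (k:ℝ) c
    then ((k:ℝ), sSup {c : ℝ | IsAffMin g (k:ℝ) c}) else (a0, b0) with hC
  have hTmin : ∀ q : ℚ, IsAffMin g (T q).1 (T q).2 := by
    intro q
    rw [hT]
    by_cases h : ∃ ab : ℝ × ℝ, IsAffMin g ab.1 ab.2 ∧ ab.1 * (q:ℝ) + ab.2 = (g (q:ℝ)).toReal
    · simp only [dif_pos h]; exact h.choose_spec.1
    · simp only [dif_neg h]; exact hab0
  have hTtang : ∀ q : ℚ, (∃ p' w' : ℝ, p' < (q:ℝ) ∧ (q:ℝ) < w' ∧ g p' ≠ ⊤ ∧ g w' ≠ ⊤) →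
      (T q).1 * (q:ℝ) + (T q).2 = (g (q:ℝ)).toReal := by
    intro q hq
    obtain ⟨p', w', h1, h2, h3, h4⟩ := hq
    obtain ⟨a, b, hab, htg⟩ := exists_tangent g hg_conv hg_ne_bot h1 h2 h3 h4
    have h : ∃ ab : ℝ × ℝ, IsAffMin g ab.1 ab.2 ∧ ab.1 * (q:ℝ) + ab.2 = (g (q:ℝ)).toReal :=
      ⟨(a, b), hab, htg⟩
    rw [hT]
    simp only [dif_pos h]
    exact h.choose_spec.2
  have hCmin : ∀ k : ℚ, IsAffMin g (C k).1 (C k).2 := by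
    intro k
    rw [hC]
    by_cases h : ∃ c : ℝ, IsAffMin g (k:ℝ) c
    · simp only [dif_pos h]
      intro y
      rcases eq_or_ne (g y) ⊤ with hy | hy
      · rw [hy]; exact le_top
      · rw [← coe_f g hg_ne_bot hy, EReal.coe_le_coe_iff]
        have : sSup {c : ℝ | IsAffMin g (k:ℝ) c} ≤ (g y).toReal - (k:ℝ) * y := by
          apply csSup_le h
          intro c hc
          have := hc y
          rw [← coe_f g hg_ne_bot hy, EReal.coe_le_coe_iff] at this
          linarith
        linarith
    · simp only [dif_neg h]; exact hab0
  have hCval : ∀ (k : ℚ) (c : ℝ), IsAffMin g (k:ℝ) c →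
      (C k).1 = (k:ℝ) ∧ c ≤ (C k).2 := by
    intro k c hc
    have h : ∃ c : ℝ, IsAffMin g (k:ℝ) c := ⟨c, hc⟩
    rw [hC]
    simp only [dif_pos h]
    refine ⟨by trivial, ?_⟩
    apply le_csSup ?_ hc
    refine ⟨(g y00).toReal - (k:ℝ) * y00, ?_⟩
    intro c' hc'
    have := hc' y00
    rw [← coe_f g hg_ne_bot hy00, EReal.coe_le_coe_iff] at this
    simp only [mem_setOf_eq] at *
    linarith
  refine ⟨Sum.elim T C, fun i => by cases i with
    | inl q => exact hTmin q
    | inr k => exact hCmin k, ?_⟩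
  intro x
  by_contra hgt
  push_neg at hgt
  obtain ⟨r, hr1, hr2⟩ := EReal.exists_between_coe_real hgt
  -- it suffices to find an index with value ≥ r
  have key : ∃ i : ℚ ⊕ ℚ, r ≤ (Sum.elim T C i).1 * x + (Sum.elim T C i).2 := by
    have lscn := lsc_neg g hg_lsc
    have convn := conv_neg g hg_conv
    have nbotn : ∀ y : ℝ, (fun y : ℝ => g (-y)) y ≠ ⊥ := fun y => hg_ne_bot (-y)
    rcases eq_or_ne (g x) ⊤ with hx | hx
    · -- g x = ⊤
      by_cases hleft : ∃ p, g p ≠ ⊤ ∧ p < x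
      · obtain ⟨p, hp, hpx⟩ := hleft
        have hD : ∀ y, g y ≠ ⊤ → y ≤ x := by
          intro y hy
          by_contra hgt'
          push_neg at hgt'
          exact (mem_D_between g hg_conv hg_ne_bot hpx hgt' hp hy) hx
        obtain ⟨k, c, hkc, hval⟩ := top_line g hg_lsc hg_ne_bot hx hD hab0 r
        obtain ⟨hC1, hC2⟩ := hCval k c hkc
        refine ⟨Sum.inr k, ?_⟩
        simp only [Sum.elim_inr]
        rw [hC1]
        linarith
      · by_cases hright : ∃ w, g w ≠ ⊤ ∧ x < w
        · obtain ⟨w, hw, hxw⟩ := hright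
          have hD : ∀ y : ℝ, (fun y : ℝ => g (-y)) y ≠ ⊤ → y ≤ -x := by
            intro y hy
            simp only at hy
            have hne : -y ≠ x := fun he => hy (by rw [he]; exact hx)
            have : ¬ (-y < x) := fun hlt' => hleft ⟨-y, hy, hlt'⟩
            have : x < -y := lt_of_le_of_ne (not_lt.mp this) (Ne.symm hne)
            linarith
          have hxneg : (fun y : ℝ => g (-y)) (-x) = ⊤ := by simp only [neg_neg]; exact hx
          obtain ⟨k, c, hkc, hval⟩ := top_line (fun y : ℝ => g (-y)) lscn nbotn hxneg hD
            (affmin_neg g hab0) r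
          have hkc' : IsAffMin g (((-k : ℚ)):ℝ) c := by
            intro y
            have h := hkc (-y)
            simp only [neg_neg] at h
            rw [show (((-k : ℚ)):ℝ) * y + c = (k:ℝ) * (-y) + c by push_cast; ring]
            exact h
          obtain ⟨hC1, hC2⟩ := hCval (-k) c hkc'
          refine ⟨Sum.inr (-k), ?_⟩
          simp only [Sum.elim_inr]
          rw [hC1]
          have : ((-k : ℚ) : ℝ) * x = (k:ℝ) * (-x) := by push_cast; ring
          rw [this]
          linarith
        · exfalso
          rcases lt_trichotomy y00 x with h | h | h
          · exact hleft ⟨y00, hy00, h⟩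
          · exact hy00 (h ▸ hx)
          · exact hright ⟨y00, hy00, h⟩
    · -- g x ≠ ⊤
      by_cases hleft : ∃ p, g p ≠ ⊤ ∧ p < x
      · obtain ⟨p, hp, hpx⟩ := hleft
        obtain ⟨q, hint, hval⟩ :=
          tangent_approx g hg_lsc hg_conv hg_ne_bot hx hp hpx hr2
        refine ⟨Sum.inl q, ?_⟩
        simp only [Sum.elim_inl]
        exact hval _ _ (hTmin q) (hTtang q hint)
      · by_cases hright : ∃ w, g w ≠ ⊤ ∧ x < w
        · obtain ⟨w, hw, hxw⟩ := hright
          have hxn : (fun y : ℝ => g (-y)) (-x) ≠ ⊤ := by simp only [neg_neg]; exact hx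
          have hpn : (fun y : ℝ => g (-y)) (-w) ≠ ⊤ := by simp only [neg_neg]; exact hw
          have hrn : (r : EReal) < (fun y : ℝ => g (-y)) (-x) := by
            simp only [neg_neg]; exact hr2
          obtain ⟨q, hint, hval⟩ := tangent_approx (fun y : ℝ => g (-y)) lscn convn nbotn
            hxn hpn (by linarith) hrn
          obtain ⟨p', w', h1, h2, h3, h4⟩ := hint
          have hint' : ∃ p'' w'' : ℝ, p'' < ((-q : ℚ):ℝ) ∧ ((-q : ℚ):ℝ) < w'' ∧
              g p'' ≠ ⊤ ∧ g w'' ≠ ⊤ := by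
            refine ⟨-w', -p', by push_cast; linarith, by push_cast; linarith, ?_, ?_⟩
            · simpa only [neg_neg] using h4
            · simpa only [neg_neg] using h3
          refine ⟨Sum.inl (-q), ?_⟩
          simp only [Sum.elim_inl]
          set a := (T (-q)).1
          set b := (T (-q)).2
          have hmin : IsAffMin g a b := hTmin (-q)
          have htg : a * ((-q : ℚ):ℝ) + b = (g (((-q : ℚ)):ℝ)).toReal := hTtang (-q) hint'
          have hminn : IsAffMin (fun y : ℝ => g (-y)) (-a) b := affmin_neg g hmin
          have htgn : (-a) * (q:ℝ) + b = ((fun y : ℝ => g (-y)) (q:ℝ)).toReal := by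
            simp only
            rw [show (-a) * (q:ℝ) + b = a * (-(q:ℝ)) + b by ring]
            rw [show (-(q:ℝ)) = ((-q : ℚ):ℝ) by push_cast; ring]
            exact htg
          have := hval (-a) b hminn htgn
          nlinarith [this]
        · -- domain is {x}
          have honly : ∀ y, g y ≠ ⊤ → y = x := by
            intro y hy
            rcases lt_trichotomy y x with h | h | h
            · exact absurd ⟨y, hy, h⟩ hleft
            · exact h
            · exact absurd ⟨y, hy, h⟩ hright
          have hmin0 : IsAffMin g (((0:ℚ)):ℝ) ((g x).toReal) := by
            intro y
            rcases eq_or_ne (g y) ⊤ with hy | hy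
            · rw [hy]; exact le_top
            · rw [honly y hy]
              rw [show (((0:ℚ)):ℝ) * x + (g x).toReal = (g x).toReal by push_cast; ring]
              exact le_of_eq (coe_f g hg_ne_bot hx)
          obtain ⟨hC1, hC2⟩ := hCval 0 _ hmin0
          refine ⟨Sum.inr 0, ?_⟩
          simp only [Sum.elim_inr]
          rw [hC1]
          have hrx : r < (g x).toReal := by
            rw [← coe_f g hg_ne_bot hx] at hr2
            exact EReal.coe_lt_coe_iff.mp hr2
          push_cast
          linarith
  obtain ⟨i, hi⟩ := key
  have : ((r:ℝ) : EReal) ≤ ⨆ i : ℚ ⊕ ℚ, (((Sum.elim T C i).1 * x + (Sum.elim T C i).2 : ℝ) : EReal) :=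
    le_trans (EReal.coe_le_coe_iff.mpr hi) (le_iSup (fun i : ℚ ⊕ ℚ => (((Sum.elim T C i).1 * x + (Sum.elim T C i).2 : ℝ) : EReal)) i)
  exact absurd (lt_of_le_of_lt this hr1) (lt_irrefl _)

end Core

section StepA
variable {α : Type*} [MeasurableSpace α]

/-- Step A : for an affine minorant, `a * vlim + b ≤ G` a.e. -/
theorem stepA (μ : Measure α) [IsFiniteMeasure μ]
    (v : ℕ → α → ℝ) (vlim : α → ℝ)
    (hv_int : ∀ n, Integrable (v n) μ) (hvlim_int : Integrable vlim μ)
    (hv_weak : WeakL1Tendsto μ v vlim)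
    (gv : ℕ → α → ℝ) (G : α → ℝ)
    (hgv_int : ∀ n, Integrable (gv n) μ) (hG_int : Integrable G μ)
    (hgv_weak : WeakL1Tendsto μ gv G)
    (a b : ℝ) (hab : ∀ n, ∀ᵐ x ∂μ, a * v n x + b ≤ gv n x) :
    ∀ᵐ x ∂μ, a * vlim x + b ≤ G x := by
  have hint : Integrable (fun x => G x - (a * vlim x + b)) μ :=
    hG_int.sub ((hvlim_int.const_mul a).add (integrable_const b))
  have h := ae_nonneg_of_forall_setIntegral_nonneg hint ?_
  · filter_upwards [h] with x hx
    simp only [Pi.zero_apply] at hx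
    linarith
  intro s hs _
  set φ : α → ℝ := s.indicator (fun _ => (1:ℝ)) with hφ
  have mφ : Measurable φ := measurable_const.indicator hs
  have bφ : ∃ C : ℝ, ∀ x, |φ x| ≤ C := by
    refine ⟨1, fun x => ?_⟩
    rw [hφ]
    by_cases hx : x ∈ s <;> simp [Set.indicator_apply, hx]
  have key : ∀ h : α → ℝ, ∫ x, h x * φ x ∂μ = ∫ x in s, h x ∂μ := by
    intro h
    rw [← integral_indicator hs]
    congr 1
    ext x
    by_cases hx : x ∈ s <;> simp [hφ, Set.indicator_apply, hx]
  have h1 := hv_weak φ mφ bφ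
  have h2 := hgv_weak φ mφ bφ
  simp only [key] at h1 h2
  set c : ℝ := (μ s).toReal with hc
  have hconst : ∀ (u : α → ℝ), Integrable u μ →
      ∫ x in s, (a * u x + b) ∂μ = a * ∫ x in s, u x ∂μ + c * b := by
    intro u hu
    rw [integral_add ((hu.restrict).const_mul a) (integrable_const b),
      integral_const_mul, integral_const, measureReal_restrict_apply_univ, smul_eq_mul]
    rfl
  have tendstoL : Tendsto (fun n => ∫ x in s, (a * v n x + b) ∂μ) atTop
      (𝓝 (∫ x in s, (a * vlim x + b) ∂μ)) := by
    have e1 : (fun n => ∫ x in s, (a * v n x + b) ∂μ)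
        = fun n => a * (∫ x in s, v n x ∂μ) + c * b :=
      funext fun n => hconst (v n) (hv_int n)
    rw [e1, hconst vlim hvlim_int]
    exact ((h1.const_mul a).add_const (c * b))
  have pern : ∀ n, ∫ x in s, (a * v n x + b) ∂μ ≤ ∫ x in s, gv n x ∂μ := by
    intro n
    refine integral_mono_ae (((hv_int n).const_mul a).add (integrable_const b)).restrict
      (hgv_int n).restrict ?_
    exact ae_restrict_of_ae (hab n)
  have hle : ∫ x in s, (a * vlim x + b) ∂μ ≤ ∫ x in s, G x ∂μ :=
    le_of_tendsto_of_tendsto' tendstoL h2 pern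
  rw [integral_sub hG_int.restrict
    ((show Integrable (fun x => a * vlim x + b) μ from
      (hvlim_int.const_mul a).add (integrable_const b))).restrict]
  linarith


end StepA

theorem statement0 {M : ℕ} (O : Set (EuclideanSpace ℝ (Fin M)))
    (hO : IsOpen O) (hObd : Bornology.IsBounded O)
    (g : ℝ → EReal)
    (hg_lsc : LowerSemicontinuous g)
    (hg_conv : ∀ x y : ℝ, ∀ t : ℝ, 0 ≤ t → t ≤ 1 →
      g (t * x + (1 - t) * y) ≤ (t : EReal) * g x + ((1 - t : ℝ) : EReal) * g y)
    (hg_ne_bot : ∀ x, g x ≠ ⊥)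
    (v : ℕ → EuclideanSpace ℝ (Fin M) → ℝ) (vlim : EuclideanSpace ℝ (Fin M) → ℝ)
    (hv_int : ∀ n, Integrable (v n) (volume.restrict O))
    (hvlim_int : Integrable vlim (volume.restrict O))
    (hv_weak : WeakL1Tendsto (volume.restrict O) v vlim)
    -- `g(v_n) ∈ L¹(O)` : in particular `g(v_n)` is real-valued a.e.
    (hgv_fin : ∀ n, ∀ᵐ x ∂(volume.restrict O), g (v n x) ≠ ⊤)
    (hgv_int : ∀ n, Integrable (fun x => (g (v n x)).toReal) (volume.restrict O))
    (G : EuclideanSpace ℝ (Fin M) → ℝ)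
    (hG_int : Integrable G (volume.restrict O))
    (hgv_weak : WeakL1Tendsto (volume.restrict O)
      (fun n x => (g (v n x)).toReal) G) :
    (∀ᵐ x ∂(volume.restrict O), g (vlim x) ≤ (G x : EReal)) ∧
    Integrable (fun x => (g (vlim x)).toReal) (volume.restrict O) ∧
    (∀ᵐ x ∂(volume.restrict O), g (vlim x) ≠ ⊤) ∧
    ∫ x, (g (vlim x)).toReal ∂(volume.restrict O) ≤
      Filter.liminf (fun n => ∫ x, (g (v n x)).toReal ∂(volume.restrict O)) atTop := by
  set μ := volume.restrict O with hμdef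
  haveI hfinmeas : IsFiniteMeasure μ :=
    ⟨by rw [Measure.restrict_apply_univ]; exact hObd.measure_lt_top⟩
  rcases eq_or_ne μ 0 with hμ | hμ
  · refine ⟨by simp [hμ], by simp [hμ], by simp [hμ], ?_⟩
    simp only [hμ, integral_zero_measure]
    rw [liminf_const (0:ℝ)]
  · haveI : (ae μ).NeBot := ae_neBot.mpr hμ
    obtain ⟨x0, hx0⟩ := (hgv_fin 0).exists
    have hproper : ∃ y, g y ≠ ⊤ := ⟨v 0 x0, hx0⟩
    obtain ⟨L, hLmin, hLsup⟩ := exists_family g hg_lsc hg_conv hg_ne_bot hproper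
    have habn : ∀ a b : ℝ, IsAffMin g a b → ∀ n,
        ∀ᵐ x ∂μ, a * v n x + b ≤ (g (v n x)).toReal := by
      intro a b hab n
      filter_upwards [hgv_fin n] with x hx
      have h := hab (v n x)
      rw [← coe_f g hg_ne_bot hx, EReal.coe_le_coe_iff] at h
      exact h
    have hA : ∀ i, ∀ᵐ x ∂μ, (L i).1 * vlim x + (L i).2 ≤ G x := fun i =>
      stepA μ v vlim hv_int hvlim_int hv_weak _ G hgv_int hG_int hgv_weak _ _
        (habn _ _ (hLmin i))
    have main_ae : ∀ᵐ x ∂μ, g (vlim x) ≤ ((G x : ℝ) : EReal) := by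
      filter_upwards [(ae_all_iff).mpr hA] with x hx
      refine le_trans (hLsup (vlim x)) (iSup_le fun i => ?_)
      exact EReal.coe_le_coe_iff.mpr (hx i)
    have h_ne_top : ∀ᵐ x ∂μ, g (vlim x) ≠ ⊤ := by
      filter_upwards [main_ae] with x hx
      exact (lt_of_le_of_lt hx (EReal.coe_lt_top _)).ne
    have htoReal_le : ∀ᵐ x ∂μ, (g (vlim x)).toReal ≤ G x := by
      filter_upwards [main_ae] with x hx
      have h := EReal.toReal_le_toReal hx (hg_ne_bot _) (EReal.coe_ne_top _)
      simpa using h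
    have hlow : ∀ᵐ x ∂μ, (L (Sum.inl 0)).1 * vlim x + (L (Sum.inl 0)).2
        ≤ (g (vlim x)).toReal := by
      filter_upwards [h_ne_top] with x hx
      have h := hLmin (Sum.inl 0) (vlim x)
      rw [← coe_f g hg_ne_bot hx, EReal.coe_le_coe_iff] at h
      exact h
    have hmeas : AEStronglyMeasurable (fun x => (g (vlim x)).toReal) μ := by
      have m0 : Measurable (EReal.toReal) := by measurability
      have m1 : Measurable (fun y : ℝ => (g y).toReal) := m0.comp hg_lsc.measurable
      exact (m1.comp_aemeasurable hvlim_int.aemeasurable).aestronglyMeasurable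
    have hint : Integrable (fun x => (g (vlim x)).toReal) μ := by
      set a0 := (L (Sum.inl 0)).1
      set b0 := (L (Sum.inl 0)).2
      refine Integrable.mono'
        (hG_int.abs.add ((hvlim_int.const_mul a0).add (integrable_const b0)).abs) hmeas ?_
      filter_upwards [htoReal_le, hlow] with x h1 h2
      simp only [Pi.add_apply]
      rw [Real.norm_eq_abs, abs_le]
      constructor
      · nlinarith [neg_abs_le (G x), neg_abs_le (a0 * vlim x + b0),
          le_abs_self (a0 * vlim x + b0), abs_nonneg (G x),
          abs_nonneg (a0 * vlim x + b0), le_abs_self (G x)]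
      · nlinarith [neg_abs_le (G x), neg_abs_le (a0 * vlim x + b0),
          le_abs_self (a0 * vlim x + b0), abs_nonneg (G x),
          abs_nonneg (a0 * vlim x + b0), le_abs_self (G x)]
    have hTend : Tendsto (fun n => ∫ x, (g (v n x)).toReal ∂μ) atTop (𝓝 (∫ x, G x ∂μ)) := by
      have h := hgv_weak (fun _ => 1) measurable_const ⟨1, fun x => by norm_num⟩
      simpa [mul_one] using h
    refine ⟨main_ae, hint, h_ne_top, ?_⟩
    rw [hTend.liminf_eq]
    exact integral_mono_ae hint hG_int htoReal_le
end

section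
/- Let O be a bounded open subset of R^M and g : R → R a convex function that is strictly convex on an open interval (a,b) ⊂ R. Suppose v_n ⇀ v weakly in L¹(O), g(v_n) ⇀ G weakly in L¹(O), and g(v) = G almost everywhere on O. Then, along a subsequence, v_n(y) → v(y) for almost every y in the set {y ∈ O : v(y) ∈ (a,b)}. -/
open MeasureTheory Set Filter Topology

/-- The infimum of right slopes of a convex function: a subgradient selection. -/
noncomputable def rightSlopeInf (g : ℝ → ℝ) (t : ℝ) : ℝ :=
  sInf ((fun u => (g (t + u) - g t) / u) '' Set.Ioi (0:ℝ))

lemma rightSlopeInf_bddBelow {g : ℝ → ℝ} (hg : ConvexOn ℝ Set.univ g) (t : ℝ) :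
    BddBelow ((fun u => (g (t + u) - g t) / u) '' Set.Ioi (0:ℝ)) := by
  refine ⟨g t - g (t - 1), ?_⟩
  rintro _ ⟨u, hu, rfl⟩
  have hu' : (0:ℝ) < u := hu
  have h := hg.slope_mono_adjacent (Set.mem_univ (t-1)) (Set.mem_univ (t+u))
      (by linarith : t - 1 < t) (by linarith : t < t + u)
  rw [show t - (t-1) = 1 by ring, show t + u - t = u by ring, div_one] at h
  exact h

lemma rightSlopeInf_le {g : ℝ → ℝ} (hg : ConvexOn ℝ Set.univ g) {t u : ℝ} (hu : 0 < u) :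
    rightSlopeInf g t ≤ (g (t + u) - g t) / u :=
  csInf_le (rightSlopeInf_bddBelow hg t) ⟨u, hu, rfl⟩

lemma le_rightSlopeInf {g : ℝ → ℝ} (hg : ConvexOn ℝ Set.univ g) {x t : ℝ} (hx : x < t) :
    (g t - g x) / (t - x) ≤ rightSlopeInf g t := by
  refine le_csInf ⟨_, ⟨1, by norm_num, rfl⟩⟩ ?_
  rintro _ ⟨u, hu, rfl⟩
  have hu' : (0:ℝ) < u := hu
  have h := hg.slope_mono_adjacent (Set.mem_univ x) (Set.mem_univ (t+u)) hx
      (by linarith : t < t + u)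
  rw [show t + u - t = u by ring] at h
  exact h

lemma rightSlopeInf_subgrad {g : ℝ → ℝ} (hg : ConvexOn ℝ Set.univ g) (t x : ℝ) :
    g t + rightSlopeInf g t * (x - t) ≤ g x := by
  rcases lt_trichotomy x t with h | h | h
  · have h1 := le_rightSlopeInf hg h
    rw [div_le_iff₀ (by linarith : (0:ℝ) < t - x)] at h1
    nlinarith
  · subst h; simp
  · have h1 := rightSlopeInf_le hg (show (0:ℝ) < x - t by linarith) (t := t)
    rw [show t + (x - t) = x by ring, le_div_iff₀ (by linarith : (0:ℝ) < x - t)] at h1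
    linarith

lemma rightSlopeInf_mono {g : ℝ → ℝ} (hg : ConvexOn ℝ Set.univ g) :
    Monotone (rightSlopeInf g) := by
  intro t1 t2 h
  rcases eq_or_lt_of_le h with rfl | hlt
  · exact le_rfl
  · have h1 := rightSlopeInf_subgrad hg t1 t2
    have h2 := rightSlopeInf_subgrad hg t2 t1
    nlinarith

lemma aux_between {H : ℝ → ℝ} (Hconv : ConvexOn ℝ Set.univ H) (Hnn : ∀ y, 0 ≤ H y)
    {t p q : ℝ} (hHt : H t = 0)
    (h : ∃ μ : ℝ, 0 ≤ μ ∧ μ ≤ 1 ∧ p = (1 - μ) * t + μ * q) : H p ≤ H q := by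
  obtain ⟨μ, h0, h1, rfl⟩ := h
  have hc := Hconv.2 (Set.mem_univ t) (Set.mem_univ q) (by linarith : (0:ℝ) ≤ 1 - μ) h0
      (by ring : (1 - μ) + μ = 1)
  simp only [smul_eq_mul] at hc
  nlinarith [Hnn q]

lemma ptwise {g : ℝ → ℝ} {a b : ℝ} (hg : ConvexOn ℝ Set.univ g)
    (hsg : StrictConvexOn ℝ (Set.Ioo a b) g) {t : ℝ} (ht : t ∈ Set.Ioo a b)
    {x : ℕ → ℝ}
    (hx : Tendsto (fun k => g (x k) - g t - rightSlopeInf g t * (x k - t)) atTop (𝓝 0)) :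
    Tendsto x atTop (𝓝 t) := by
  set s := rightSlopeInf g t with hs
  set H : ℝ → ℝ := fun y => g y - g t - s * (y - t) with hHdef
  have Hnn : ∀ y, 0 ≤ H y := by
    intro y
    have := rightSlopeInf_subgrad hg t y
    simp only [hHdef]
    linarith
  have hHt : H t = 0 := by simp [hHdef]
  have Hconv : ConvexOn ℝ Set.univ H := by
    refine ⟨convex_univ, fun p _ q _ cp cq hcp hcq hpq => ?_⟩
    have hc := hg.2 (Set.mem_univ p) (Set.mem_univ q) hcp hcq hpq
    have hcq' : cq = 1 - cp := by linarith
    subst hcq'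
    simp only [smul_eq_mul, hHdef] at hc ⊢
    nlinarith
  obtain ⟨ta, tb⟩ := ht
  rw [Metric.tendsto_atTop]
  intro ε hε
  set ε' := min ε (min ((b - t)/2) ((t - a)/2)) with hε'def
  have hε'pos : 0 < ε' := lt_min hε (lt_min (by linarith) (by linarith))
  have hε'ε : ε' ≤ ε := min_le_left _ _
  have hb' : t + ε' < b := by
    have : ε' ≤ (b - t)/2 := le_trans (min_le_right _ _) (min_le_left _ _)
    linarith
  have ha' : a < t - ε' := by
    have : ε' ≤ (t - a)/2 := le_trans (min_le_right _ _) (min_le_right _ _)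
    linarith
  have key : ∀ q ∈ Set.Ioo a b, q ≠ t → 0 < H q := by
    intro q hq hqt
    have h2 := hsg.2 ⟨ta, tb⟩ hq (fun h => hqt h.symm) (by norm_num : (0:ℝ) < 1/2)
        (by norm_num : (0:ℝ) < 1/2) (by norm_num)
    simp only [smul_eq_mul] at h2
    have h3 := Hnn ((1/2 : ℝ) * t + (1/2 : ℝ) * q)
    simp only [hHdef] at h3 ⊢
    nlinarith
  have hc1 : 0 < H (t + ε') := key _ ⟨by linarith, hb'⟩ (by linarith)
  have hc2 : 0 < H (t - ε') := key _ ⟨ha', by linarith⟩ (by linarith)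
  set c := min (H (t + ε')) (H (t - ε')) with hcdef
  have hcpos : 0 < c := lt_min hc1 hc2
  have hev := hx.eventually_lt_const hcpos
  obtain ⟨N, hN⟩ := Filter.eventually_atTop.mp hev
  refine ⟨N, fun k hk => ?_⟩
  have hHxk : H (x k) < c := hN k hk
  have h1 : x k < t + ε' := by
    by_contra hcon
    push_neg at hcon
    have hd : 0 < x k - t := by linarith
    have hle : H (t + ε') ≤ H (x k) := by
      refine aux_between Hconv Hnn hHt ⟨ε' / (x k - t), div_nonneg hε'pos.le hd.le, ?_, ?_⟩
      · rw [div_le_one hd]; linarith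
      · field_simp
        ring
    have : c ≤ H (x k) := le_trans (min_le_left _ _) hle
    linarith
  have h2 : t - ε' < x k := by
    by_contra hcon
    push_neg at hcon
    have hd : 0 < t - x k := by linarith
    have hle : H (t - ε') ≤ H (x k) := by
      refine aux_between Hconv Hnn hHt ⟨ε' / (t - x k), div_nonneg hε'pos.le hd.le, ?_, ?_⟩
      · rw [div_le_one hd]; linarith
      · field_simp
        ring
    have : c ≤ H (x k) := le_trans (min_le_right _ _) hle
    linarith
  rw [Real.dist_eq, abs_lt]
  constructor <;> linarith

/-- If `g : ℝ → ℝ` is convex, strictly convex on `(a,b)`,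
`v_n ⇀ v` and `g(v_n) ⇀ G` weakly in `L¹(O)`, and `g(v) = G` a.e., then along a
subsequence `v_n(y) → v(y)` for a.e. `y` in `{y ∈ O : v(y) ∈ (a,b)}`. -/
theorem statement1 {M : ℕ} (O : Set (EuclideanSpace ℝ (Fin M)))
    (hO : IsOpen O) (hObd : Bornology.IsBounded O)
    (g : ℝ → ℝ) (a b : ℝ) (hab : a < b)
    (hg_conv : ConvexOn ℝ Set.univ g)
    (hg_sconv : StrictConvexOn ℝ (Set.Ioo a b) g)
    (v : ℕ → EuclideanSpace ℝ (Fin M) → ℝ) (vlim : EuclideanSpace ℝ (Fin M) → ℝ)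
    (hv_int : ∀ n, Integrable (v n) (volume.restrict O))
    (hvlim_int : Integrable vlim (volume.restrict O))
    (hv_weak : WeakL1Tendsto (volume.restrict O) v vlim)
    (hgv_int : ∀ n, Integrable (fun x => g (v n x)) (volume.restrict O))
    (G : EuclideanSpace ℝ (Fin M) → ℝ)
    (hG_int : Integrable G (volume.restrict O))
    (hgv_weak : WeakL1Tendsto (volume.restrict O) (fun n x => g (v n x)) G)
    (hGg : ∀ᵐ x ∂(volume.restrict O), g (vlim x) = G x) :
    ∃ φ : ℕ → ℕ, StrictMono φ ∧
      ∀ᵐ y ∂(volume.restrict O), vlim y ∈ Set.Ioo a b →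
        Tendsto (fun k => v (φ k) y) atTop (nhds (vlim y)) := by
  classical
  set μ := volume.restrict O with hμ
  set s := rightSlopeInf g with hsdef
  have hs_mono : Monotone s := rightSlopeInf_mono hg_conv
  have hs_meas : Measurable s := hs_mono.measurable
  -- measurable representative of vlim
  set w := hvlim_int.aestronglyMeasurable.mk vlim with hwdef
  have hw_meas : Measurable w := hvlim_int.aestronglyMeasurable.stronglyMeasurable_mk.measurable
  have hww : vlim =ᵐ[μ] w := hvlim_int.aestronglyMeasurable.ae_eq_mk
  set A : Set (EuclideanSpace ℝ (Fin M)) := w ⁻¹' Set.Ioo a b with hAdef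
  have hA_meas : MeasurableSet A := hw_meas measurableSet_Ioo
  -- test functions
  set χ : EuclideanSpace ℝ (Fin M) → ℝ := A.indicator (fun _ => 1) with hχdef
  set φ : EuclideanSpace ℝ (Fin M) → ℝ := A.indicator (fun x => s (w x)) with hφdef
  have hχ_meas : Measurable χ := (measurable_const).indicator hA_meas
  have hφ_meas : Measurable φ := (hs_meas.comp hw_meas).indicator hA_meas
  have hχ_bdd : ∀ x, |χ x| ≤ 1 := by
    intro x
    by_cases hx : x ∈ A
    · simp [hχdef, Set.indicator_of_mem hx]
    · simp [hχdef, Set.indicator_of_notMem hx]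
  set C : ℝ := max |s a| |s b| with hCdef
  have hC_nn : 0 ≤ C := le_trans (abs_nonneg _) (le_max_left _ _)
  have hφ_bdd : ∀ x, |φ x| ≤ C := by
    intro x
    by_cases hx : x ∈ A
    · have hxm : w x ∈ Set.Ioo a b := hx
      rw [hφdef, Set.indicator_of_mem hx]
      have h1 : s a ≤ s (w x) := hs_mono hxm.1.le
      have h2 : s (w x) ≤ s b := hs_mono hxm.2.le
      rw [abs_le]
      constructor
      · calc -C ≤ -|s a| := by simp [hCdef]
          _ ≤ s a := neg_abs_le _
          _ ≤ s (w x) := h1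
      · calc s (w x) ≤ s b := h2
          _ ≤ |s b| := le_abs_self _
          _ ≤ C := le_max_right _ _
    · rw [hφdef, Set.indicator_of_notMem hx]
      simpa using hC_nn
  -- a.e. facts
  have hgw_ae : (fun x => g (w x)) =ᵐ[μ] G := by
    filter_upwards [hww, hGg] with x h1 h2
    rw [← h1, h2]
  have hgw_int : Integrable (fun x => g (w x)) μ := hG_int.congr hgw_ae.symm
  have hw_int : Integrable w μ := hvlim_int.congr hww
  -- multiplication by bounded measurable preserves integrability
  have hmul : ∀ (f ψ : EuclideanSpace ℝ (Fin M) → ℝ), Integrable f μ → Measurable ψ →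
      (∀ x, |ψ x| ≤ C ∨ |ψ x| ≤ 1) → Integrable (fun x => f x * ψ x) μ := by
    intro f ψ hf hψ hbd
    have : Integrable (fun x => ψ x * f x) μ := by
      refine hf.bdd_mul (c := max C 1) hψ.aestronglyMeasurable (Filter.Eventually.of_forall fun x => ?_)
      rw [Real.norm_eq_abs]
      rcases hbd x with h | h
      · exact le_trans h (le_max_left _ _)
      · exact le_trans h (le_max_right _ _)
    simpa [mul_comm] using this
  -- the nonnegative functions F n
  set F : ℕ → EuclideanSpace ℝ (Fin M) → ℝ :=
    fun n x => g (v n x) * χ x - g (w x) * χ x - v n x * φ x + w x * φ x with hFdef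
  have i1 : ∀ n, Integrable (fun x => g (v n x) * χ x) μ :=
    fun n => hmul _ _ (hgv_int n) hχ_meas (fun x => Or.inr (hχ_bdd x))
  have i2 : Integrable (fun x => g (w x) * χ x) μ :=
    hmul _ _ hgw_int hχ_meas (fun x => Or.inr (hχ_bdd x))
  have i3 : ∀ n, Integrable (fun x => v n x * φ x) μ :=
    fun n => hmul _ _ (hv_int n) hφ_meas (fun x => Or.inl (hφ_bdd x))
  have i4 : Integrable (fun x => w x * φ x) μ :=
    hmul _ _ hw_int hφ_meas (fun x => Or.inl (hφ_bdd x))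
  have hF_int : ∀ n, Integrable (F n) μ := fun n => (((i1 n).sub i2).sub (i3 n)).add i4
  have hF_nn : ∀ n x, 0 ≤ F n x := by
    intro n x
    by_cases hx : x ∈ A
    · have hsub := rightSlopeInf_subgrad hg_conv (w x) (v n x)
      simp only [hFdef, hχdef, hφdef, Set.indicator_of_mem hx, hsdef]
      nlinarith
    · simp [hFdef, hχdef, hφdef, Set.indicator_of_notMem hx]
  -- integral of F n tends to 0
  have hFeq : ∀ n, ∫ x, F n x ∂μ = ((∫ x, g (v n x) * χ x ∂μ) - (∫ x, g (w x) * χ x ∂μ)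
      - (∫ x, v n x * φ x ∂μ)) + (∫ x, w x * φ x ∂μ) := by
    intro n
    have e1 := integral_add (((i1 n).sub i2).sub (i3 n)) i4
    have e2 := integral_sub ((i1 n).sub i2) (i3 n)
    have e3 := integral_sub (i1 n) i2
    simp only [Pi.sub_apply] at e1 e2 e3
    show ∫ x, g (v n x) * χ x - g (w x) * χ x - v n x * φ x + w x * φ x ∂μ = _
    rw [e1, e2, e3]
  have hL1 := hgv_weak χ hχ_meas ⟨1, hχ_bdd⟩
  have hL2 := hv_weak φ hφ_meas ⟨C, hφ_bdd⟩
  have heq1 : ∫ x, G x * χ x ∂μ = ∫ x, g (w x) * χ x ∂μ := by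
    refine integral_congr_ae ?_
    filter_upwards [hgw_ae] with x hx
    rw [hx]
  have heq2 : ∫ x, vlim x * φ x ∂μ = ∫ x, w x * φ x ∂μ := by
    refine integral_congr_ae ?_
    filter_upwards [hww] with x hx
    rw [hx]
  have hIlim : Tendsto (fun n => ∫ x, F n x ∂μ) atTop (𝓝 0) := by
    have hconst1 : Tendsto (fun _ : ℕ => ∫ x, g (w x) * χ x ∂μ) atTop
        (𝓝 (∫ x, g (w x) * χ x ∂μ)) := tendsto_const_nhds
    have hconst2 : Tendsto (fun _ : ℕ => ∫ x, w x * φ x ∂μ) atTop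
        (𝓝 (∫ x, w x * φ x ∂μ)) := tendsto_const_nhds
    have h := ((hL1.sub hconst1).sub hL2).add hconst2
    have hval : ((∫ x, G x * χ x ∂μ) - (∫ x, g (w x) * χ x ∂μ) - (∫ x, vlim x * φ x ∂μ))
        + (∫ x, w x * φ x ∂μ) = 0 := by
      rw [heq1, heq2]; ring
    rw [hval] at h
    refine h.congr fun n => (hFeq n).symm
  -- L¹ convergence to 0, hence convergence in measure
  have hsnorm : Tendsto (fun n => eLpNorm (F n - 0) 1 μ) atTop (𝓝 0) := by
    have heq : ∀ n, eLpNorm (F n - 0) 1 μ = ENNReal.ofReal (∫ x, F n x ∂μ) := by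
      intro n
      rw [sub_zero, eLpNorm_one_eq_lintegral_enorm]
      have hnorm : ∫⁻ x, ‖F n x‖ₑ ∂μ = ∫⁻ x, ENNReal.ofReal (F n x) ∂μ :=
        lintegral_congr fun x => Real.enorm_eq_ofReal (hF_nn n x)
      rw [hnorm, ← ofReal_integral_eq_lintegral_ofReal (hF_int n)
        (Filter.Eventually.of_forall (hF_nn n))]
    have h := ENNReal.tendsto_ofReal hIlim
    rw [ENNReal.ofReal_zero] at h
    exact h.congr fun n => (heq n).symm
  have htm : TendstoInMeasure μ F atTop 0 :=
    tendstoInMeasure_of_tendsto_eLpNorm (p := 1) one_ne_zero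
      (fun n => (hF_int n).aestronglyMeasurable) aestronglyMeasurable_zero hsnorm
  obtain ⟨ns, hns_mono, hns_ae⟩ := htm.exists_seq_tendsto_ae
  refine ⟨ns, hns_mono, ?_⟩
  filter_upwards [hns_ae, hww] with y hy1 hy2 hyI
  -- pointwise argument
  have hyA : y ∈ A := by rw [hAdef, Set.mem_preimage, ← hy2]; exact hyI
  have hy1' : Tendsto (fun i =>
      g (v (ns i) y) - g (vlim y) - rightSlopeInf g (vlim y) * (v (ns i) y - vlim y))
      atTop (𝓝 0) := by
    simp only [Pi.zero_apply] at hy1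
    refine hy1.congr fun i => ?_
    simp only [hFdef, hχdef, hφdef, Set.indicator_of_mem hyA, ← hy2, hsdef]
    ring
  exact ptwise hg_conv hg_sconv hyI hy1'
end

section
/- Let ρ^{m-1} be a positive piecewise constant function on a finite tetrahedral mesh of Ω and u a given bounded velocity field. If ρ^m solves the upwind discontinuous Galerkin scheme ∫_Ω (ρ^m - ρ^{m-1})/Δt · φ dx = Σ_Γ ∫_Γ (ρ^m_-(u·ν)^+ + ρ^m_+(u·ν)^-)[φ]_Γ dS for all piecewise constants φ, then min_x ρ^m ≥ (min_x ρ^{m-1}) / (1 + Δt ‖div u‖_{L^∞(Ω)}). In particular, if ρ^{m-1} > 0 everywhere, then ρ^m > 0 everywhere. -/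
open Finset

/-- positivity preservation for the upwind discontinuous Galerkin
continuity scheme.

The mesh is abstracted as a finite nonempty set `ι` of elements with volumes
`vol E > 0`, and a finite set `F` of interior faces; the face `Γ` is shared by
the elements `Em Γ` and `Ep Γ` (with the fixed normal `ν` pointing from
`Em Γ` to `Ep Γ`).  For a face `Γ`, `a Γ = ∫_Γ (u·ν)^+ dS ≥ 0` and
`b Γ = ∫_Γ (u·ν)^- dS ≤ 0`.  The piecewise constant `div u` is `d : ι → ℝ`,
related to the face fluxes through the divergence theorem (`hdiv`, using that
`u·ν = 0` on `∂Ω`), and `D = ‖div u‖_{L^∞(Ω)}`.  The scheme (`hscheme`) is the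
upwind DG scheme tested with every piecewise constant `φ`.

Conclusion: `min ρ^m ≥ min ρ^{m-1} / (1 + Δt ‖div u‖_∞)`; in particular, if
`ρ^{m-1} > 0` everywhere then `ρ^m > 0` everywhere. -/
theorem statement3 {ι F : Type*} [Fintype ι] [Nonempty ι] [DecidableEq ι] [Fintype F]
    (vol : ι → ℝ) (hvol : ∀ E, 0 < vol E)
    (Em Ep : F → ι)
    (a : F → ℝ) (ha : ∀ Γ, 0 ≤ a Γ)
    (b : F → ℝ) (hb : ∀ Γ, b Γ ≤ 0)
    (Δt : ℝ) (hΔt : 0 < Δt)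
    (d : ι → ℝ) (D : ℝ) (hD : ∀ E, |d E| ≤ D)
    (hdiv : ∀ E : ι, vol E * d E =
      ∑ Γ : F, ((if Em Γ = E then (1 : ℝ) else 0) - (if Ep Γ = E then 1 else 0))
        * (a Γ + b Γ))
    (ρm ρm1 : ι → ℝ)
    (hρm1pos : ∀ E, 0 < ρm1 E)
    (hscheme : ∀ φ : ι → ℝ,
      ∑ E : ι, vol E * ((ρm E - ρm1 E) / Δt) * φ E =
      ∑ Γ : F, (ρm (Em Γ) * a Γ + ρm (Ep Γ) * b Γ) * (φ (Ep Γ) - φ (Em Γ))) :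
    (∀ E : ι,
      (Finset.univ.inf' Finset.univ_nonempty ρm1) / (1 + Δt * D) ≤ ρm E) ∧
    (∀ E : ι, 0 < ρm E) := by
  classical
  -- Step 1: positivity of ρm
  have hpos : ∀ E, 0 < ρm E := by
    by_contra h
    push_neg at h
    obtain ⟨E1, hE1⟩ := h
    have hs := hscheme (fun E => if ρm E ≤ 0 then 1 else 0)
    have hL : ∑ E : ι, vol E * ((ρm E - ρm1 E) / Δt) * (if ρm E ≤ 0 then (1:ℝ) else 0) < 0 := by
      have hlt : (∑ E : ι, vol E * ((ρm E - ρm1 E) / Δt) * (if ρm E ≤ 0 then (1:ℝ) else 0))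
          < ∑ _E : ι, (0:ℝ) := by
        refine Finset.sum_lt_sum (fun i _ => ?_) ⟨E1, Finset.mem_univ _, ?_⟩
        · by_cases hi : ρm i ≤ 0
          · rw [if_pos hi]
            have hdiv' : (ρm i - ρm1 i)/Δt < 0 :=
              div_neg_of_neg_of_pos (by linarith [hρm1pos i]) hΔt
            nlinarith [hvol i]
          · simp [hi]
        · rw [if_pos hE1]
          have hdiv' : (ρm E1 - ρm1 E1)/Δt < 0 :=
            div_neg_of_neg_of_pos (by linarith [hρm1pos E1]) hΔt
          nlinarith [hvol E1]
      simpa using hlt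
    have hR : 0 ≤ ∑ Γ : F, (ρm (Em Γ) * a Γ + ρm (Ep Γ) * b Γ) *
        ((if ρm (Ep Γ) ≤ 0 then (1:ℝ) else 0) - (if ρm (Em Γ) ≤ 0 then 1 else 0)) := by
      refine Finset.sum_nonneg fun Γ _ => ?_
      by_cases h1 : ρm (Em Γ) ≤ 0 <;> by_cases h2 : ρm (Ep Γ) ≤ 0 <;>
        simp only [h1, h2, if_true, if_false] <;> (try push_neg at h1) <;> (try push_neg at h2) <;>
        nlinarith [ha Γ, hb Γ]
    linarith
  -- Step 2: lower bound at the minimum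
  obtain ⟨E0, -, hE0⟩ := Finset.exists_mem_eq_inf' (Finset.univ_nonempty (α := ι)) ρm
  have hmin : ∀ E, ρm E0 ≤ ρm E := fun E => hE0 ▸ Finset.inf'_le _ (Finset.mem_univ E)
  have hs := hscheme (fun E => if E = E0 then 1 else 0)
  have hL : ∑ E : ι, vol E * ((ρm E - ρm1 E) / Δt) * (if E = E0 then (1:ℝ) else 0)
      = vol E0 * ((ρm E0 - ρm1 E0) / Δt) := by
    rw [Finset.sum_eq_single E0]
    · simp
    · intro b _ hbne; simp [hbne]
    · intro habs; exact absurd (Finset.mem_univ E0) habs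
  have hR : ρm E0 * (∑ Γ : F, ((if Ep Γ = E0 then (1:ℝ) else 0) - (if Em Γ = E0 then 1 else 0)) * (a Γ + b Γ))
      ≤ ∑ Γ : F, (ρm (Em Γ) * a Γ + ρm (Ep Γ) * b Γ) *
          ((if Ep Γ = E0 then (1:ℝ) else 0) - (if Em Γ = E0 then 1 else 0)) := by
    rw [Finset.mul_sum]
    refine Finset.sum_le_sum fun Γ _ => ?_
    by_cases h1 : Em Γ = E0 <;> by_cases h2 : Ep Γ = E0 <;>
      simp only [h1, h2, if_true, if_false] <;>
      nlinarith [ha Γ, hb Γ, hmin (Em Γ), hmin (Ep Γ)]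
  have hsum : ∑ Γ : F, ((if Ep Γ = E0 then (1:ℝ) else 0) - (if Em Γ = E0 then 1 else 0)) * (a Γ + b Γ)
      = -(vol E0 * d E0) := by
    rw [hdiv E0, ← Finset.sum_neg_distrib]
    exact Finset.sum_congr rfl fun Γ _ => by ring
  rw [hsum] at hR
  rw [hL] at hs
  have h1 : ρm E0 * -(vol E0 * d E0) ≤ vol E0 * ((ρm E0 - ρm1 E0) / Δt) := by
    rw [hs]; exact hR
  have hX : ρm E0 - ρm1 E0 = Δt * ((ρm E0 - ρm1 E0) / Δt) :=
    (mul_div_cancel₀ _ hΔt.ne').symm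
  have key : ρm1 E0 ≤ ρm E0 * (1 + Δt * d E0) := by
    nlinarith [h1, hvol E0, hΔt, hX]
  have hDnn : 0 ≤ D := le_trans (abs_nonneg _) (hD E0)
  have hdle : d E0 ≤ D := le_trans (le_abs_self _) (hD E0)
  have h1D : (0:ℝ) < 1 + Δt * D := by nlinarith
  have hmin1 : Finset.univ.inf' Finset.univ_nonempty ρm1 ≤ ρm1 E0 :=
    Finset.inf'_le _ (Finset.mem_univ E0)
  refine ⟨fun E => ?_, hpos⟩
  rw [div_le_iff₀ h1D]
  have hE : ρm E0 ≤ ρm E := hmin E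
  have hp0 : 0 < ρm E0 := hpos E0
  nlinarith [key, hmin1, hE, hp0, mul_le_mul_of_nonneg_left hdle (le_of_lt hΔt)]
end
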